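/- For every finite digraph D and capacity c ∈ ℝ₊^E, the set of fractional flames bounded by c, { f ∈ ℝ₊^E : f ≤ c and ϱ_f(v) = λ_f(v) for all v ∈ V−r }, is a polygreedoid: it contains the zero vector, and whenever x, y are in the set with ‖x‖₁ < ‖y‖₁ there is an edge e with y(e) > x(e) such that x + ε·χ_e is in the set for all sufficiently small ε > 0. -/

import Mathlib

attribute [local instance] Classical.propDecidable

/-- A finite digraph: edges `E` with tail and head maps (parallel edges allowed). -/
structure Digraph' (V E : Type) where
  tail : E → V
  head : E → V

namespace Digraph'

variable {V E : Type} [Fintype V] [Fintype E]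

/-- `es` is a directed walk from `r` to `v`. -/
def IsWalk (D : Digraph' V E) : V → V → List E → Prop
  | r, v, [] => r = v
  | r, v, e :: es => D.tail e = r ∧ D.IsWalk (D.head e) v es

/-- `es` is a directed path from `r` to `v` using only edges of `F`. -/
def IsPathIn (D : Digraph' V E) (F : Set E) (r v : V) (es : List E) : Prop :=
  D.IsWalk r v es ∧ (∀ e ∈ es, e ∈ F) ∧ (r :: es.map D.head).Nodup

/-- The members of a list of paths are pairwise edge-disjoint. -/
def EdgeDisjoint (P : List (List E)) : Prop :=
  P.Pairwise (fun p q => ∀ e, e ∈ p → e ∉ q)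

/-- The maximum number of pairwise edge-disjoint `r → v` paths inside `F`. -/
noncomputable def lam (D : Digraph' V E) (F : Set E) (r v : V) : ℕ :=
  sSup {k | ∃ P : List (List E), P.length = k ∧ (∀ p ∈ P, D.IsPathIn F r v p) ∧
    EdgeDisjoint P}

/-- The set of edges of `F` whose head is `v`. -/
def inEdges (D : Digraph' V E) (F : Set E) (v : V) : Set E := {e ∈ F | D.head e = v}

/-- The in-degree of `v` in the subgraph `F`. -/
noncomputable def indeg (D : Digraph' V E) (F : Set E) (v : V) : ℕ :=
  (D.inEdges F v).ncard

/-- `I` arises as the set of last edges of a system of pairwise edge-disjoint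
`r → v` paths in `F` (membership in the gammoid `G_F(v)`). -/
def InGammoid (D : Digraph' V E) (F : Set E) (r v : V) (I : Set E) : Prop :=
  ∃ P : List (List E), (∀ p ∈ P, D.IsPathIn F r v p) ∧ EdgeDisjoint P ∧
    I = {e | ∃ p ∈ P, p.getLast? = some e}

/-- `F` is an `r`-flame: the in-degree of each `v ≠ r` equals λ_F(r,v). -/
def IsFlame (D : Digraph' V E) (r : V) (F : Set E) : Prop :=
  ∀ v, v ≠ r → D.indeg F v = D.lam F r v

/-- Total of `x` on the in-edges of `v`. -/
noncomputable def inflow (D : Digraph' V E) (x : E → ℝ) (v : V) : ℝ :=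
  ∑ e, if D.head e = v then x e else 0

/-- Total of `x` on the out-edges of `v`. -/
noncomputable def outflow (D : Digraph' V E) (x : E → ℝ) (v : V) : ℝ :=
  ∑ e, if D.tail e = v then x e else 0

/-- Total of `x` on the edges entering the vertex set `W`. -/
noncomputable def rhoSet (D : Digraph' V E) (x : E → ℝ) (W : Set V) : ℝ :=
  ∑ e, if D.head e ∈ W ∧ D.tail e ∉ W then x e else 0

/-- `x` is a (nonnegative) `r → v` flow. -/
def IsFlow (D : Digraph' V E) (r v : V) (x : E → ℝ) : Prop :=
  (∀ e, 0 ≤ x e) ∧ (∀ u, u ≠ r → u ≠ v → D.inflow x u = D.outflow x u) ∧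
    D.inflow x r = 0 ∧ D.outflow x v = 0

/-- The flow-connectivity from `r` to `v` under capacity `c`. -/
noncomputable def lamF (D : Digraph' V E) (r v : V) (c : E → ℝ) : ℝ :=
  sSup {a | ∃ x, D.IsFlow r v x ∧ x ≤ c ∧ D.outflow x r = a}

/-- Characteristic vector of an edge. -/
noncomputable def chi (e : E) : E → ℝ := fun e' => if e' = e then 1 else 0

/-- Restriction of `x` to the in-edges of `v` (zero elsewhere). -/
noncomputable def restrictIn (D : Digraph' V E) (v : V) (x : E → ℝ) : E → ℝ :=
  fun e => if D.head e = v then x e else 0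

/-- The polygammoid `G_c(v)`: restrictions to the in-edges of `v`
of `r → v` flows bounded by `c`. -/
def polygammoid (D : Digraph' V E) (r v : V) (c : E → ℝ) : Set (E → ℝ) :=
  {s | ∃ x, D.IsFlow r v x ∧ x ≤ c ∧ D.restrictIn v x = s}

/-- `D` has no parallel edges. -/
def NoParallel (D : Digraph' V E) : Prop :=
  ∀ e e', D.tail e = D.tail e' → D.head e = D.head e' → e = e'

/-- `es` is a directed cycle. -/
def IsCycle (D : Digraph' V E) (es : List E) : Prop :=
  es ≠ [] ∧ ∃ u, D.IsWalk u u es ∧ (es.map D.head).Nodup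

/-- Characteristic vector of a list of edges. -/
noncomputable def charVec (es : List E) : E → ℝ :=
  fun e => ((es.filter (fun e' => e' = e)).length : ℝ)

end Digraph'

set_option linter.unusedSectionVars false
set_option maxHeartbeats 1600000

namespace FlameAux
open Digraph'

variable {V E : Type} [Fintype V] [Fintype E] (D : Digraph' V E)

lemma inflow_nonneg {x : E → ℝ} (hx : ∀ e, 0 ≤ x e) (v : V) : 0 ≤ D.inflow x v := by
  apply Finset.sum_nonneg; intro e _; split <;> simp [hx e]

lemma inflow_zero (v : V) : D.inflow (0 : E → ℝ) v = 0 := by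
  simp [inflow]

lemma outflow_zero (v : V) : D.outflow (0 : E → ℝ) v = 0 := by
  simp [outflow]

lemma inflow_no_head {r : V} (hr : ∀ e, D.head e ≠ r) (x : E → ℝ) :
    D.inflow x r = 0 := by
  unfold inflow; apply Finset.sum_eq_zero; intro e _; simp [hr e]

lemma isFlow_zero (r v : V) : D.IsFlow r v 0 := by
  refine ⟨fun e => le_refl 0, fun u _ _ => ?_, ?_, ?_⟩ <;>
    simp [inflow_zero, outflow_zero]

lemma inflow_add (g h : E → ℝ) (v : V) :
    D.inflow (fun e => g e + h e) v = D.inflow g v + D.inflow h v := by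
  unfold inflow; rw [← Finset.sum_add_distrib]
  apply Finset.sum_congr rfl; intro e _; split <;> simp

lemma outflow_add (g h : E → ℝ) (v : V) :
    D.outflow (fun e => g e + h e) v = D.outflow g v + D.outflow h v := by
  unfold outflow; rw [← Finset.sum_add_distrib]
  apply Finset.sum_congr rfl; intro e _; split <;> simp

lemma inflow_single (a : ℝ) (e₀ : E) (b : V) :
    D.inflow (fun e => if e = e₀ then a else 0) b = if D.head e₀ = b then a else 0 := by
  unfold inflow
  rw [Finset.sum_eq_single e₀]
  · simp
  · intro e _ he; simp [he]
  · intro h; exact absurd (Finset.mem_univ e₀) h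

lemma outflow_single (a : ℝ) (e₀ : E) (b : V) :
    D.outflow (fun e => if e = e₀ then a else 0) b = if D.tail e₀ = b then a else 0 := by
  unfold outflow
  rw [Finset.sum_eq_single e₀]
  · simp
  · intro e _ he; simp [he]
  · intro h; exact absurd (Finset.mem_univ e₀) h

lemma outflow_le_total {x : E → ℝ} (hx : ∀ e, 0 ≤ x e) (v : V) :
    D.outflow x v ≤ ∑ e, x e := by
  apply Finset.sum_le_sum; intro e _; split <;> simp [hx e]

noncomputable def Wf (W : Set V) : Finset V := Finset.univ.filter (· ∈ W)

lemma mem_Wf {W : Set V} {v : V} : v ∈ Wf W ↔ v ∈ W := by simp [Wf]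

lemma sum_inflow (g : E → ℝ) (W : Set V) :
    ∑ v ∈ Wf W, D.inflow g v = ∑ e, if D.head e ∈ W then g e else 0 := by
  unfold inflow; rw [Finset.sum_comm]
  apply Finset.sum_congr rfl; intro e _
  rw [Finset.sum_ite_eq (Wf W) (D.head e) (fun _ => g e)]
  simp [mem_Wf]

lemma sum_outflow (g : E → ℝ) (W : Set V) :
    ∑ v ∈ Wf W, D.outflow g v = ∑ e, if D.tail e ∈ W then g e else 0 := by
  unfold outflow; rw [Finset.sum_comm]
  apply Finset.sum_congr rfl; intro e _
  rw [Finset.sum_ite_eq (Wf W) (D.tail e) (fun _ => g e)]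
  simp [mem_Wf]

lemma cut_identity (g : E → ℝ) (W : Set V) :
    ∑ v ∈ Wf W, (D.inflow g v - D.outflow g v)
      = D.rhoSet g W - ∑ e, if D.tail e ∈ W ∧ D.head e ∉ W then g e else 0 := by
  rw [Finset.sum_sub_distrib, sum_inflow, sum_outflow]
  unfold rhoSet
  rw [← Finset.sum_sub_distrib, ← Finset.sum_sub_distrib]
  apply Finset.sum_congr rfl; intro e _
  by_cases h1 : D.head e ∈ W <;> by_cases h2 : D.tail e ∈ W <;> simp [h1, h2]

lemma flow_value {r v : V} (hvr : v ≠ r) {z : E → ℝ} (hz : D.IsFlow r v z) :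
    D.outflow z r = D.inflow z v := by
  have huniv : Wf (Set.univ : Set V) = Finset.univ := by
    ext a; simp [mem_Wf]
  have h0 : ∑ b, (D.inflow z b - D.outflow z b) = 0 := by
    have := cut_identity D z (Set.univ : Set V)
    rw [huniv] at this
    rw [this]
    unfold rhoSet; simp
  have hz' : ∀ b, b ∉ ({r, v} : Finset V) → D.inflow z b - D.outflow z b = 0 := by
    intro b hb
    simp only [Finset.mem_insert, Finset.mem_singleton] at hb
    push_neg at hb
    rw [hz.2.1 b hb.1 hb.2]; ring
  have hsub : ∑ b ∈ ({r, v} : Finset V), (D.inflow z b - D.outflow z b) = 0 := by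
    rw [Finset.sum_subset (Finset.subset_univ _) (fun b _ hb => hz' b hb), h0]
  rw [Finset.sum_pair (Ne.symm hvr)] at hsub
  rw [hz.2.2.1, hz.2.2.2] at hsub
  linarith

lemma weak_duality {r v : V} (hvr : v ≠ r) {z f : E → ℝ} (hz : D.IsFlow r v z)
    (hzf : z ≤ f) {W : Set V} (hvW : v ∈ W) (hrW : r ∉ W) :
    D.outflow z r ≤ D.rhoSet f W := by
  have hid := cut_identity D z W
  have hlhs : ∑ b ∈ Wf W, (D.inflow z b - D.outflow z b) = D.inflow z v := by
    rw [Finset.sum_eq_single_of_mem v (mem_Wf.2 hvW)]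
    · rw [hz.2.2.2]; ring
    · intro b hb hbv
      have hbW : b ∈ W := mem_Wf.1 hb
      have hbr : b ≠ r := fun h => hrW (h ▸ hbW)
      rw [hz.2.1 b hbr hbv]; ring
  have hval := flow_value D hvr hz
  have hout : 0 ≤ ∑ e, if D.tail e ∈ W ∧ D.head e ∉ W then z e else 0 := by
    apply Finset.sum_nonneg; intro e _; split <;> simp [hz.1 e]
  have hrho : D.rhoSet z W ≤ D.rhoSet f W := by
    apply Finset.sum_le_sum; intro e _; split <;> simp [hzf e]
  rw [hval, ← hlhs, hid]
  linarith

lemma flowset_nonempty (r v : V) {f : E → ℝ} (hf : ∀ e, 0 ≤ f e) :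
    (0:ℝ) ∈ {a | ∃ x, D.IsFlow r v x ∧ x ≤ f ∧ D.outflow x r = a} := by
  exact ⟨0, isFlow_zero D r v, fun e => hf e, outflow_zero D r⟩

lemma flowset_bddAbove (r v : V) (f : E → ℝ) :
    BddAbove {a | ∃ x, D.IsFlow r v x ∧ x ≤ f ∧ D.outflow x r = a} := by
  refine ⟨∑ e, f e, ?_⟩
  rintro a ⟨z, hz, hzf, rfl⟩
  calc D.outflow z r ≤ ∑ e, z e := outflow_le_total D hz.1 r
    _ ≤ ∑ e, f e := Finset.sum_le_sum (fun e _ => hzf e)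

lemma lamF_nonneg (r v : V) {f : E → ℝ} (hf : ∀ e, 0 ≤ f e) : 0 ≤ D.lamF r v f :=
  le_csSup (flowset_bddAbove D r v f) (flowset_nonempty D r v hf)

lemma lamF_le_rhoSet {r v : V} (hvr : v ≠ r) {f : E → ℝ} (hf : ∀ e, 0 ≤ f e)
    {W : Set V} (hvW : v ∈ W) (hrW : r ∉ W) :
    D.lamF r v f ≤ D.rhoSet f W := by
  apply csSup_le ⟨0, flowset_nonempty D r v hf⟩
  rintro a ⟨z, hz, hzf, rfl⟩
  exact weak_duality D hvr hz hzf hvW hrW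

lemma lamF_le_inflow {r v : V} (hvr : v ≠ r) {f : E → ℝ} (hf : ∀ e, 0 ≤ f e) :
    D.lamF r v f ≤ D.inflow f v := by
  refine le_trans (lamF_le_rhoSet D hvr hf (W := {v}) rfl ?_) ?_
  · exact fun h => hvr (Set.mem_singleton_iff.1 h).symm
  · apply Finset.sum_le_sum; intro e _
    by_cases h1 : D.head e = v <;> by_cases h2 : D.tail e = v <;>
      simp [h1, h2, Set.mem_singleton_iff, hf e]

lemma lamF_mono (r v : V) {f g : E → ℝ} (hf : ∀ e, 0 ≤ f e) (hfg : f ≤ g) :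
    D.lamF r v f ≤ D.lamF r v g := by
  apply csSup_le_csSup (flowset_bddAbove D r v g) ⟨0, flowset_nonempty D r v hf⟩
  rintro a ⟨z, hz, hzf, rfl⟩
  exact ⟨z, hz, le_trans hzf hfg, rfl⟩

lemma lamF_ge (r v : V) {z f : E → ℝ} (hz : D.IsFlow r v z) (hzf : z ≤ f) :
    D.outflow z r ≤ D.lamF r v f :=
  le_csSup (flowset_bddAbove D r v f) ⟨z, hz, hzf, rfl⟩

lemma lamF_zero (r v : V) : D.lamF r v (0 : E → ℝ) = 0 := by
  apply le_antisymm
  · apply csSup_le ⟨0, flowset_nonempty D r v (fun e => le_refl 0)⟩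
    rintro a ⟨z, hz, hzf, rfl⟩
    apply le_trans (outflow_le_total D hz.1 r)
    apply Finset.sum_nonpos; intro e _; exact hzf e
  · exact lamF_nonneg D r v (fun e => le_refl 0)

lemma rho_mono {f g : E → ℝ} (hfg : f ≤ g) (W : Set V) :
    D.rhoSet f W ≤ D.rhoSet g W := by
  apply Finset.sum_le_sum; intro e _; split <;> simp [hfg e]

lemma rho_submodular {g : E → ℝ} (hg : ∀ e, 0 ≤ g e) (A B : Set V) :
    D.rhoSet g (A ∪ B) + D.rhoSet g (A ∩ B) ≤ D.rhoSet g A + D.rhoSet g B := by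
  unfold rhoSet
  rw [← Finset.sum_add_distrib, ← Finset.sum_add_distrib]
  apply Finset.sum_le_sum; intro e _
  by_cases hA : D.head e ∈ A <;> by_cases hB : D.head e ∈ B <;>
    by_cases tA : D.tail e ∈ A <;> by_cases tB : D.tail e ∈ B <;>
    simp [Set.mem_union, Set.mem_inter_iff, hA, hB, tA, tB, hg e]

lemma sum_eq_sum_inflow (g : E → ℝ) : ∑ e, g e = ∑ v, D.inflow g v := by
  unfold inflow
  rw [Finset.sum_comm]
  apply Finset.sum_congr rfl; intro e _
  rw [Finset.sum_ite_eq Finset.univ (D.head e) (fun _ => g e)]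
  simp


lemma continuous_inflow (v : V) : Continuous (fun x : E → ℝ => D.inflow x v) := by
  apply continuous_finset_sum; intro e _
  by_cases h : D.head e = v <;> simp only [h, if_true, if_false]
  · exact continuous_apply e
  · exact continuous_const

lemma continuous_outflow (v : V) : Continuous (fun x : E → ℝ => D.outflow x v) := by
  apply continuous_finset_sum; intro e _
  by_cases h : D.tail e = v <;> simp only [h, if_true, if_false]
  · exact continuous_apply e
  · exact continuous_const

lemma exists_maxflow (r v : V) {f : E → ℝ} (hf : ∀ e, 0 ≤ f e) :
    ∃ z, D.IsFlow r v z ∧ z ≤ f ∧ D.outflow z r = D.lamF r v f := by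
  set K : Set (E → ℝ) := {z | D.IsFlow r v z ∧ z ≤ f} with hK
  have hKne : (0 : E → ℝ) ∈ K := ⟨isFlow_zero D r v, fun e => hf e⟩
  have hclosed : IsClosed K := by
    have hKeq : K = (⋂ e, {z : E → ℝ | 0 ≤ z e}) ∩
        ((⋂ u : V, {z : E → ℝ | u ≠ r → u ≠ v → D.inflow z u = D.outflow z u}) ∩
        ({z : E → ℝ | D.inflow z r = 0} ∩ ({z : E → ℝ | D.outflow z v = 0} ∩
          ⋂ e, {z : E → ℝ | z e ≤ f e}))) := by
      ext z
      simp only [hK, Set.mem_setOf_eq, Set.mem_inter_iff, Set.mem_iInter, IsFlow]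
      constructor
      · rintro ⟨⟨h1, h2, h3, h4⟩, h5⟩
        exact ⟨h1, h2, h3, h4, fun e => h5 e⟩
      · rintro ⟨h1, h2, h3, h4, h5⟩
        exact ⟨⟨h1, h2, h3, h4⟩, fun e => h5 e⟩
    rw [hKeq]
    refine (isClosed_iInter fun e => isClosed_le continuous_const (continuous_apply e)).inter
      ((isClosed_iInter fun u => ?_).inter
        ((isClosed_eq (continuous_inflow D r) continuous_const).inter
          ((isClosed_eq (continuous_outflow D v) continuous_const).inter
            (isClosed_iInter fun e => isClosed_le (continuous_apply e) continuous_const))))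
    by_cases hu1 : u = r
    · simp [hu1]
    by_cases hu2 : u = v
    · simp [hu2]
    · have : {z : E → ℝ | u ≠ r → u ≠ v → D.inflow z u = D.outflow z u}
          = {z : E → ℝ | D.inflow z u = D.outflow z u} := by
        ext z; simp [hu1, hu2]
      rw [this]
      exact isClosed_eq (continuous_inflow D u) (continuous_outflow D u)
  have hsub : K ⊆ Set.Icc (0 : E → ℝ) f := by
    intro z hz
    exact Set.mem_Icc.2 ⟨fun e => hz.1.1 e, hz.2⟩
  have hcompact : IsCompact K := IsCompact.of_isClosed_subset isCompact_Icc hclosed hsub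
  obtain ⟨z, hzK, hmax⟩ := hcompact.exists_isMaxOn ⟨0, hKne⟩
    (continuous_outflow D r).continuousOn
  refine ⟨z, hzK.1, hzK.2, le_antisymm ?_ ?_⟩
  · exact le_csSup (flowset_bddAbove D r v f) ⟨z, hzK.1, hzK.2, rfl⟩
  · show sSup {a | ∃ x, D.IsFlow r v x ∧ x ≤ f ∧ D.outflow x r = a} ≤ D.outflow z r
    have hne : {a | ∃ x, D.IsFlow r v x ∧ x ≤ f ∧ D.outflow x r = a}.Nonempty :=
      ⟨D.outflow z r, ⟨z, hzK.1, hzK.2, rfl⟩⟩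
    apply csSup_le hne
    rintro a ⟨w, hw, hwf, rfl⟩
    exact hmax (⟨hw, hwf⟩ : w ∈ K)


def RWalk (D : Digraph' V E) (z f : E → ℝ) : V → V → List (E × Bool) → Prop
  | p, a, [] => p = a
  | p, a, s :: rest =>
      (s.2 = false ∧ D.tail s.1 = p ∧ z s.1 < f s.1 ∧ RWalk D z f (D.head s.1) a rest)
    ∨ (s.2 = true ∧ D.head s.1 = p ∧ 0 < z s.1 ∧ RWalk D z f (D.tail s.1) a rest)

variable {z f : E → ℝ}

lemma rwalk_snoc_fwd {p a : V} {es : List (E × Bool)} (h : RWalk D z f p a es)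
    {e : E} (hlt : z e < f e) (hta : D.tail e = a) :
    RWalk D z f p (D.head e) (es ++ [(e, false)]) := by
  induction es generalizing p with
  | nil => exact Or.inl ⟨rfl, by rw [hta]; exact h.symm ▸ rfl, hlt, rfl⟩
  | cons s rest ih =>
    rcases h with ⟨h1, h2, h3, h4⟩ | ⟨h1, h2, h3, h4⟩
    · exact Or.inl ⟨h1, h2, h3, ih h4⟩
    · exact Or.inr ⟨h1, h2, h3, ih h4⟩

lemma rwalk_snoc_bwd {p a : V} {es : List (E × Bool)} (h : RWalk D z f p a es)
    {e : E} (hpos : 0 < z e) (hha : D.head e = a) :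
    RWalk D z f p (D.tail e) (es ++ [(e, true)]) := by
  induction es generalizing p with
  | nil => exact Or.inr ⟨rfl, by rw [hha]; exact h.symm ▸ rfl, hpos, rfl⟩
  | cons s rest ih =>
    rcases h with ⟨h1, h2, h3, h4⟩ | ⟨h1, h2, h3, h4⟩
    · exact Or.inl ⟨h1, h2, h3, ih h4⟩
    · exact Or.inr ⟨h1, h2, h3, ih h4⟩

/-- source of a residual step -/
def src (D : Digraph' V E) (s : E × Bool) : V := if s.2 then D.head s.1 else D.tail s.1

lemma rwalk_trim {u : V} : ∀ (es : List (E × Bool)) (p : V), RWalk D z f p u es →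
    ∃ es', RWalk D z f p u es' ∧ ∀ s ∈ es', src D s ≠ u := by
  intro es
  induction es with
  | nil => intro p h; exact ⟨[], h, by simp⟩
  | cons s rest ih =>
    intro p h
    by_cases hp : p = u
    · exact ⟨[], hp, by simp⟩
    rcases h with ⟨h1, h2, h3, h4⟩ | ⟨h1, h2, h3, h4⟩
    · obtain ⟨es', hw', hs'⟩ := ih (D.head s.1) h4
      refine ⟨s :: es', Or.inl ⟨h1, h2, h3, hw'⟩, ?_⟩
      intro t ht
      rcases List.mem_cons.1 ht with rfl | ht
      · simpa [src, h1, h2] using hp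
      · exact hs' t ht
    · obtain ⟨es', hw', hs'⟩ := ih (D.tail s.1) h4
      refine ⟨s :: es', Or.inr ⟨h1, h2, h3, hw'⟩, ?_⟩
      intro t ht
      rcases List.mem_cons.1 ht with rfl | ht
      · simpa [src, h1, h2] using hp
      · exact hs' t ht

lemma rwalk_valid {p a : V} : ∀ {es : List (E × Bool)}, RWalk D z f p a es →
    ∀ s ∈ es, (s.2 = true ∧ 0 < z s.1) ∨ (s.2 = false ∧ z s.1 < f s.1) := by
  intro es
  induction es generalizing p with
  | nil => intro _ s hs; simp at hs
  | cons t rest ih =>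
    intro h s hs
    rcases List.mem_cons.1 hs with rfl | hs
    · rcases h with ⟨h1, _, h3, _⟩ | ⟨h1, _, h3, _⟩
      · exact Or.inr ⟨h1, h3⟩
      · exact Or.inl ⟨h1, h3⟩
    · rcases h with ⟨_, _, _, h4⟩ | ⟨_, _, _, h4⟩
      · exact ih h4 s hs
      · exact ih h4 s hs

noncomputable def wOf (ε' : ℝ) (l : List (E × Bool)) : E → ℝ := fun e =>
  ε' * (((l.filter (fun s => s = ((e, false) : E × Bool))).length : ℝ)
      - ((l.filter (fun s => s = ((e, true) : E × Bool))).length : ℝ))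

lemma wOf_nil (ε' : ℝ) : wOf (E := E) ε' [] = fun _ => 0 := by
  funext e; simp [wOf]

lemma wOf_cons (ε' : ℝ) (s : E × Bool) (l : List (E × Bool)) :
    wOf ε' (s :: l) = fun e => ((if s = (e, false) then ε' else 0)
      + (if s = (e, true) then -ε' else 0)) + wOf ε' l e := by
  funext e
  by_cases h1 : s = (e, false) <;> by_cases h2 : s = (e, true)
  · exact absurd (h1.symm.trans h2) (by simp)
  · simp [wOf, List.filter_cons, h1, h2]
    push_cast; ring
  · simp [wOf, List.filter_cons, h1, h2]
    push_cast; ring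
  · simp [wOf, List.filter_cons, h1, h2]

lemma net_wOf (ε' : ℝ) : ∀ (es : List (E × Bool)) (p a : V), RWalk D z f p a es →
    ∀ b, D.inflow (wOf ε' es) b - D.outflow (wOf ε' es) b
      = ε' * ((if b = a then 1 else 0) - (if b = p then 1 else 0)) := by
  intro es
  induction es with
  | nil =>
    intro p a h b
    have hpa : p = a := h
    rw [wOf_nil]
    have h1 : D.inflow (fun _ => (0:ℝ)) b = 0 := by simp [inflow]
    have h2 : D.outflow (fun _ => (0:ℝ)) b = 0 := by simp [outflow]
    rw [h1, h2, hpa]; ring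
  | cons s rest ih =>
    intro p a h b
    obtain ⟨e₀, b₀⟩ := s
    rcases h with ⟨h1, h2, h3, h4⟩ | ⟨h1, h2, h3, h4⟩ <;> simp only at h1 <;> subst h1
    · -- forward step: p = tail e₀, continue from head e₀
      have hfun : wOf ε' ((e₀, false) :: rest)
          = fun e => (if e = e₀ then ε' else 0) + wOf ε' rest e := by
        rw [wOf_cons]; funext e
        by_cases he : e = e₀
        · simp [he, Prod.ext_iff]
        · simp [he, Prod.ext_iff]
          intro h; exact absurd h.symm he
      rw [hfun, inflow_add D _ _ b, outflow_add D _ _ b,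
        inflow_single D ε' e₀ b, outflow_single D ε' e₀ b, h2]
      have hrest := ih (D.head e₀) a h4 b
      have e1 : (if D.head e₀ = b then ε' else 0)
          = ε' * (if b = D.head e₀ then 1 else 0) := by
        rcases eq_or_ne (D.head e₀) b with h | h
        · rw [if_pos h, if_pos h.symm]; ring
        · rw [if_neg h, if_neg (fun hh => h hh.symm)]; ring
      have e2 : (if p = b then ε' else 0) = ε' * (if b = p then 1 else 0) := by
        rcases eq_or_ne p b with h | h
        · rw [if_pos h, if_pos h.symm]; ring
        · rw [if_neg h, if_neg (fun hh => h hh.symm)]; ring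
      rw [e1, e2]
      linear_combination hrest
    · -- backward step: p = head e₀, continue from tail e₀
      have hfun : wOf ε' ((e₀, true) :: rest)
          = fun e => (if e = e₀ then -ε' else 0) + wOf ε' rest e := by
        rw [wOf_cons]; funext e
        by_cases he : e = e₀
        · simp [he, Prod.ext_iff]
        · simp [he, Prod.ext_iff]
          intro h; exact absurd h.symm he
      rw [hfun, inflow_add D _ _ b, outflow_add D _ _ b,
        inflow_single D (-ε') e₀ b, outflow_single D (-ε') e₀ b, h2]
      have hrest := ih (D.tail e₀) a h4 b
      have e1 : (if p = b then -ε' else 0) = -(ε' * (if b = p then 1 else 0)) := by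
        rcases eq_or_ne p b with h | h
        · rw [if_pos h, if_pos h.symm]; ring
        · rw [if_neg h, if_neg (fun hh => h hh.symm)]; ring
      have e2 : (if D.tail e₀ = b then -ε' else 0)
          = -(ε' * (if b = D.tail e₀ then 1 else 0)) := by
        rcases eq_or_ne (D.tail e₀) b with h | h
        · rw [if_pos h, if_pos h.symm]; ring
        · rw [if_neg h, if_neg (fun hh => h hh.symm)]; ring
      rw [e1, e2]
      linear_combination hrest

lemma exists_mincut {r u : V} (hr : ∀ e, D.head e ≠ r) (hu : u ≠ r)
    {f : E → ℝ} (hf : ∀ e, 0 ≤ f e) :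
    ∃ W : Set V, u ∈ W ∧ r ∉ W ∧ D.rhoSet f W ≤ D.lamF r u f := by
  obtain ⟨z, hz, hzf, hval⟩ := exists_maxflow D r u hf
  set R : Set V := {a | ∃ es, RWalk D z f r a es} with hR
  have hrR : r ∈ R := ⟨[], rfl⟩
  by_cases huR : u ∈ R
  · exfalso
    obtain ⟨es0, hw0⟩ := huR
    obtain ⟨es, hwes, hsrc⟩ := rwalk_trim D es0 r hw0
    have hne : es ≠ [] := by
      intro h
      subst h
      exact hu (show r = u from hwes).symm
    have hneF : es.toFinset.Nonempty := by
      rcases es with _ | ⟨s, l⟩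
      · exact absurd rfl hne
      · exact ⟨s, by simp⟩
    have hL : 0 < es.length := List.length_pos_iff.mpr hne
    have hLR : (0:ℝ) < (es.length : ℝ) := by exact_mod_cast hL
    set slack : E × Bool → ℝ := fun s => if s.2 then z s.1 else f s.1 - z s.1
      with hslackdef
    set ms : ℝ := es.toFinset.inf' hneF slack with hms
    have hmspos : 0 < ms := by
      rw [hms, Finset.lt_inf'_iff]
      intro s hs
      rcases rwalk_valid D hwes s (List.mem_toFinset.1 hs) with ⟨h1, h2⟩ | ⟨h1, h2⟩
      · simp [hslackdef, h1, h2]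
      · simp only [hslackdef, h1, if_false, Bool.false_eq_true]
        linarith
    set ε' : ℝ := ms / es.length with hε'
    have hε'pos : 0 < ε' := div_pos hmspos hLR
    have hmsL : ε' * es.length = ms := div_mul_cancel₀ ms (ne_of_gt hLR)
    set w : E → ℝ := wOf ε' es with hwdef
    have hwe : ∀ e, w e = ε' *
        (((es.filter (fun s => s = ((e, false) : E × Bool))).length : ℝ)
          - ((es.filter (fun s => s = ((e, true) : E × Bool))).length : ℝ)) :=
      fun e => rfl
    have hbounds : ∀ e, 0 ≤ z e + w e ∧ z e + w e ≤ f e := by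
      intro e
      have hc1 : (0:ℝ) ≤ ((es.filter (fun s => s = ((e, false) : E × Bool))).length : ℝ) :=
        Nat.cast_nonneg _
      have hc2 : (0:ℝ) ≤ ((es.filter (fun s => s = ((e, true) : E × Bool))).length : ℝ) :=
        Nat.cast_nonneg _
      have hLc1 : ((es.filter (fun s => s = ((e, false) : E × Bool))).length : ℝ)
          ≤ (es.length : ℝ) := by exact_mod_cast List.length_filter_le _ _
      have hLc2 : ((es.filter (fun s => s = ((e, true) : E × Bool))).length : ℝ)
          ≤ (es.length : ℝ) := by exact_mod_cast List.length_filter_le _ _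
      constructor
      · by_cases h0 : ((e, true) : E × Bool) ∈ es
        · have hsl : ms ≤ z e := by
            have h := Finset.inf'_le (b := ((e,true) : E × Bool)) slack
              (List.mem_toFinset.2 h0)
            rw [← hms] at h
            simpa [hslackdef] using h
          have hw1 : -(ε' * es.length) ≤ w e := by
            rw [hwe e]
            nlinarith [hε'pos.le]
          rw [hmsL] at hw1
          linarith [hz.1 e]
        · have hcm0 : (es.filter (fun s => s = ((e, true) : E × Bool))) = [] := by
            rw [List.filter_eq_nil_iff]
            intro a ha hcontra
            rw [show a = ((e, true) : E × Bool) from by simpa using hcontra] at ha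
            exact h0 ha
          have : 0 ≤ w e := by
            rw [hwe e, hcm0]
            simp
            positivity
          linarith [hz.1 e]
      · by_cases h0 : ((e, false) : E × Bool) ∈ es
        · have hsl : ms ≤ f e - z e := by
            have h := Finset.inf'_le (b := ((e,false) : E × Bool)) slack
              (List.mem_toFinset.2 h0)
            rw [← hms] at h
            simpa [hslackdef] using h
          have hw1 : w e ≤ ε' * es.length := by
            rw [hwe e]
            nlinarith [hε'pos.le]
          rw [hmsL] at hw1
          linarith
        · have hcp0 : (es.filter (fun s => s = ((e, false) : E × Bool))) = [] := by
            rw [List.filter_eq_nil_iff]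
            intro a ha hcontra
            rw [show a = ((e, false) : E × Bool) from by simpa using hcontra] at ha
            exact h0 ha
          have : w e ≤ 0 := by
            rw [hwe e, hcp0]
            simp
            positivity
          linarith [hzf e]
    have hwtail : ∀ e, D.tail e = u → w e = 0 := by
      intro e hte
      have h1 : ((e, false) : E × Bool) ∉ es := by
        intro hmem
        exact hsrc _ hmem (by simp [src, hte])
      have h2 : ((e, true) : E × Bool) ∉ es := by
        intro hmem
        rcases rwalk_valid D hwes _ hmem with ⟨_, hpos⟩ | ⟨hfalse, _⟩
        · have hle : z e ≤ D.outflow z u := by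
            have := Finset.single_le_sum
              (f := fun e' => if D.tail e' = u then z e' else 0)
              (fun e' _ => by by_cases h : D.tail e' = u <;> simp [h, hz.1 e']) (Finset.mem_univ e)
            simp [hte] at this; exact this
          rw [hz.2.2.2] at hle
          simp only at hpos
          linarith
        · simp at hfalse
      have hf1 : (es.filter (fun s => s = ((e, false) : E × Bool))) = [] := by
        rw [List.filter_eq_nil_iff]
        intro a ha hcontra
        rw [show a = ((e, false) : E × Bool) from by simpa using hcontra] at ha
        exact h1 ha
      have hf2 : (es.filter (fun s => s = ((e, true) : E × Bool))) = [] := by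
        rw [List.filter_eq_nil_iff]
        intro a ha hcontra
        rw [show a = ((e, true) : E × Bool) from by simpa using hcontra] at ha
        exact h2 ha
      rw [hwe e, hf1, hf2]
      simp
    set z' : E → ℝ := fun e => z e + w e with hz'def
    have houtw : D.outflow w u = 0 := by
      apply Finset.sum_eq_zero
      intro e _
      split
      case isTrue h => exact hwtail e h
      case isFalse => rfl
    have hflow : D.IsFlow r u z' := by
      refine ⟨fun e => (hbounds e).1, ?_, inflow_no_head D hr z', ?_⟩
      · intro b hbr hbu
        have h1 := net_wOf D ε' es r u hwes b
        rw [if_neg hbu, if_neg hbr] at h1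
        have h2 := hz.2.1 b hbr hbu
        have h3 : D.inflow z' b = D.inflow z b + D.inflow w b := inflow_add D z w b
        have h4 : D.outflow z' b = D.outflow z b + D.outflow w b := outflow_add D z w b
        rw [← hwdef] at h1
        rw [h3, h4]
        linarith
      · have h4 : D.outflow z' u = D.outflow z u + D.outflow w u := outflow_add D z w u
        rw [h4, hz.2.2.2, houtw]
        ring
    have hle : z' ≤ f := fun e => (hbounds e).2
    have hout : D.outflow z' r = D.lamF r u f + ε' := by
      have h1 := net_wOf D ε' es r u hwes r
      rw [if_neg (fun h => hu h.symm), if_pos rfl, ← hwdef] at h1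
      have h2 : D.inflow w r = 0 := inflow_no_head D hr w
      have h4 : D.outflow z' r = D.outflow z r + D.outflow w r := outflow_add D z w r
      rw [h4, hval]
      linarith
    have hcontra := lamF_ge D r u hflow hle
    rw [hout] at hcontra
    linarith
  · refine ⟨{a | a ∉ R}, huR, fun h => h hrR, ?_⟩
    set W : Set V := {a | a ∉ R} with hW
    have hcross : ∀ e, D.head e ∈ W → D.tail e ∉ W → z e = f e := by
      intro e hh ht
      have htR : D.tail e ∈ R := not_not.1 ht
      obtain ⟨es, hwt⟩ := htR
      by_contra hne
      have hlt : z e < f e := lt_of_le_of_ne (hzf e) hne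
      exact hh ⟨es ++ [(e, false)], rwalk_snoc_fwd D hwt hlt rfl⟩
    have hout0 : ∀ e, D.tail e ∈ W → D.head e ∉ W → z e = 0 := by
      intro e ht hh
      obtain ⟨es, hwh⟩ := not_not.1 hh
      by_contra hne
      have hpos : 0 < z e := lt_of_le_of_ne (hz.1 e) (Ne.symm hne)
      exact ht ⟨es ++ [(e, true)], rwalk_snoc_bwd D hwh hpos rfl⟩
    have hid := cut_identity D z W
    have hlhs : ∑ b ∈ Wf W, (D.inflow z b - D.outflow z b) = D.inflow z u := by
      rw [Finset.sum_eq_single_of_mem u (mem_Wf.2 huR)]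
      · rw [hz.2.2.2]; ring
      · intro b hb hbu
        have hbW : b ∈ W := mem_Wf.1 hb
        have hbr : b ≠ r := fun h => hbW (h ▸ hrR)
        rw [hz.2.1 b hbr hbu]; ring
    have hrho : D.rhoSet z W = D.rhoSet f W := by
      apply Finset.sum_congr rfl; intro e _
      split
      case isTrue h => exact hcross e h.1 h.2
      case isFalse => rfl
    have hvalu : D.inflow z u = D.lamF r u f := by rw [← flow_value D hu hz, hval]
    rw [hlhs] at hid
    rw [hvalu] at hid
    rw [hrho] at hid
    rw [hid, le_sub_iff_add_le, add_le_iff_nonpos_right]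
    apply Finset.sum_nonpos
    intro e _
    by_cases h : D.tail e ∈ W ∧ D.head e ∉ W
    · rw [if_pos h]
      exact le_of_eq (hout0 e h.1 h.2)
    · rw [if_neg h]



lemma rho_singleton_le {x : E → ℝ} (hx : ∀ e, 0 ≤ x e) (v : V) :
    D.rhoSet x {v} ≤ D.inflow x v := by
  apply Finset.sum_le_sum; intro e _
  by_cases h1 : D.head e = v <;> by_cases h2 : D.tail e = v <;>
    simp [h1, h2, Set.mem_singleton_iff, hx e]

lemma chi_eq (ε : ℝ) (e₀ : E) (x : E → ℝ) :
    (x + ε • Digraph'.chi e₀) = fun e => x e + (if e = e₀ then ε else 0) := by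
  funext e
  simp only [Pi.add_apply, Pi.smul_apply, Digraph'.chi, smul_eq_mul]
  by_cases h : e = e₀ <;> simp [h]

lemma rho_add_single (x : E → ℝ) (ε : ℝ) (e₀ : E) (W : Set V) :
    D.rhoSet (fun e => x e + (if e = e₀ then ε else 0)) W
      = D.rhoSet x W + (if D.head e₀ ∈ W ∧ D.tail e₀ ∉ W then ε else 0) := by
  unfold rhoSet
  have : ∀ e, (if D.head e ∈ W ∧ D.tail e ∉ W then x e + (if e = e₀ then ε else 0) else 0)
      = (if D.head e ∈ W ∧ D.tail e ∉ W then x e else 0)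
        + (if D.head e ∈ W ∧ D.tail e ∉ W then (if e = e₀ then ε else 0) else 0) := by
    intro e; split <;> simp
  rw [Finset.sum_congr rfl (fun e _ => this e), Finset.sum_add_distrib]
  congr 1
  rw [Finset.sum_eq_single e₀]
  · by_cases h : D.head e₀ ∈ W ∧ D.tail e₀ ∉ W <;> simp [h]
  · intro e _ he
    by_cases h : D.head e ∈ W ∧ D.tail e ∉ W <;> simp [h, he]
  · intro h; exact absurd (Finset.mem_univ e₀) h

lemma inflow_add_single (x : E → ℝ) (ε : ℝ) (e₀ : E) (b : V) :
    D.inflow (fun e => x e + (if e = e₀ then ε else 0)) b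
      = D.inflow x b + (if D.head e₀ = b then ε else 0) := by
  rw [inflow_add D x (fun e => if e = e₀ then ε else 0) b, inflow_single D ε e₀ b]

end FlameAux


open Digraph' in
/-- The fractional flames bounded by `c` form a polygreedoid: the zero vector
belongs to it, and the continuous augmentation property holds. -/
theorem stmt13 {V E : Type} [Fintype V] [Fintype E] (D : Digraph' V E)
    (hsimple : D.NoParallel) (r : V) (hr : ∀ e, D.head e ≠ r)
    (c : E → ℝ) (hc : ∀ e, 0 ≤ c e) :
    (0 : E → ℝ) ∈ {f : E → ℝ | (∀ e, 0 ≤ f e) ∧ f ≤ c ∧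
        ∀ v, v ≠ r → D.inflow f v = D.lamF r v f} ∧
    ∀ x ∈ {f : E → ℝ | (∀ e, 0 ≤ f e) ∧ f ≤ c ∧
        ∀ v, v ≠ r → D.inflow f v = D.lamF r v f},
      ∀ y ∈ {f : E → ℝ | (∀ e, 0 ≤ f e) ∧ f ≤ c ∧
        ∀ v, v ≠ r → D.inflow f v = D.lamF r v f},
      (∑ e, |x e|) < (∑ e, |y e|) →
      ∃ e, x e < y e ∧ ∃ ε₀ > (0:ℝ), ∀ ε : ℝ, 0 < ε → ε ≤ ε₀ →
        (x + ε • chi e) ∈ {f : E → ℝ | (∀ e, 0 ≤ f e) ∧ f ≤ c ∧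
          ∀ v, v ≠ r → D.inflow f v = D.lamF r v f} := by
  constructor
  · refine ⟨fun e => le_refl 0, fun e => hc e, fun v hv => ?_⟩
    rw [show D.inflow (0 : E → ℝ) v = 0 from FlameAux.inflow_zero D v,
      show D.lamF r v (0 : E → ℝ) = 0 from FlameAux.lamF_zero D r v]
  · intro x hx y hy hsum
    obtain ⟨hx0, hxc, hxflame⟩ := hx
    obtain ⟨hy0, hyc, hyflame⟩ := hy
    have hsums : ∑ e, x e < ∑ e, y e := by
      have h1 : ∑ e, |x e| = ∑ e, x e :=
        Finset.sum_congr rfl (fun e _ => abs_of_nonneg (hx0 e))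
      have h2 : ∑ e, |y e| = ∑ e, y e :=
        Finset.sum_congr rfl (fun e _ => abs_of_nonneg (hy0 e))
      rwa [h1, h2] at hsum
    have hvex : ∃ v, D.inflow x v < D.inflow y v := by
      by_contra h; push_neg at h
      have := Finset.sum_le_sum (fun v (_ : v ∈ Finset.univ) => h v)
      rw [← FlameAux.sum_eq_sum_inflow, ← FlameAux.sum_eq_sum_inflow] at this
      linarith
    obtain ⟨v, hvlt⟩ := hvex
    have hvr : v ≠ r := by
      intro h; subst h
      rw [FlameAux.inflow_no_head D hr x, FlameAux.inflow_no_head D hr y] at hvlt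
      exact lt_irrefl 0 hvlt
    -- maximal tight set for v w.r.t. x
    set T : Set (Set V) := {W | v ∈ W ∧ r ∉ W ∧ D.rhoSet x W ≤ D.inflow x v} with hT
    have hvT : ({v} : Set V) ∈ T :=
      ⟨rfl, fun h => hvr (Set.mem_singleton_iff.1 h).symm, FlameAux.rho_singleton_le D hx0 v⟩
    obtain ⟨W, hWT, hWmax⟩ :=
      Set.Finite.exists_maximalFor id T (Set.toFinite T) ⟨{v}, hvT⟩
    obtain ⟨hvW, hrW, hWle⟩ := hWT
    have hWrho : D.rhoSet x W = D.inflow x v := by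
      refine le_antisymm hWle ?_
      rw [hxflame v hvr]
      exact FlameAux.lamF_le_rhoSet D hvr hx0 hvW hrW
    -- a crossing edge on which y exceeds x
    have hcompare : D.rhoSet x W < D.rhoSet y W := by
      rw [hWrho]
      calc D.inflow x v < D.inflow y v := hvlt
        _ = D.lamF r v y := hyflame v hvr
        _ ≤ D.rhoSet y W := FlameAux.lamF_le_rhoSet D hvr hy0 hvW hrW
    have hex : ∃ e, (D.head e ∈ W ∧ D.tail e ∉ W) ∧ x e < y e := by
      by_contra hcon; push_neg at hcon
      have : D.rhoSet y W ≤ D.rhoSet x W := by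
        apply Finset.sum_le_sum; intro e _
        by_cases hcr : D.head e ∈ W ∧ D.tail e ∉ W
        · rw [if_pos hcr, if_pos hcr]; exact hcon e hcr
        · rw [if_neg hcr, if_neg hcr]
      linarith
    obtain ⟨e₀, ⟨hheadW, htailW⟩, hxye⟩ := hex
    have hur : D.head e₀ ≠ r := hr e₀
    -- no tight set for u := head e₀ contains tail e₀
    have hnotight : ∀ W' : Set V, D.head e₀ ∈ W' → r ∉ W' → D.tail e₀ ∈ W' →
        D.inflow x (D.head e₀) < D.rhoSet x W' := by
      intro W' hu' hr' ht'
      have hge : D.inflow x (D.head e₀) ≤ D.rhoSet x W' := by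
        rw [hxflame _ hur]
        exact FlameAux.lamF_le_rhoSet D hur hx0 hu' hr'
      rcases hge.lt_or_eq with h | h
      · exact h
      exfalso
      have hsub := FlameAux.rho_submodular D hx0 W W'
      have hUge : D.inflow x v ≤ D.rhoSet x (W ∪ W') := by
        rw [hxflame v hvr]
        exact FlameAux.lamF_le_rhoSet D hvr hx0 (Or.inl hvW)
          (fun hmem => hmem.elim hrW hr')
      have hIge : D.inflow x (D.head e₀) ≤ D.rhoSet x (W ∩ W') := by
        rw [hxflame _ hur]
        exact FlameAux.lamF_le_rhoSet D hur hx0 ⟨hheadW, hu'⟩ (fun hmem => hrW hmem.1)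
      have hUT : W ∪ W' ∈ T := by
        refine ⟨Or.inl hvW, fun hmem => hmem.elim hrW hr', ?_⟩
        rw [← h] at hsub
        linarith [hWrho]
      have heq := hWmax hUT Set.subset_union_left
      simp only [id] at heq
      have hW'sub : W' ⊆ W := by
        exact fun a ha => heq (Set.subset_union_right ha)
      exact htailW (hW'sub ht')
    -- the threshold ε₁ over all relevant cuts
    have hβne : (Finset.univ : Finset (V → Bool)).Nonempty :=
      ⟨fun _ => true, Finset.mem_univ _⟩
    set g : (V → Bool) → ℝ := fun β =>
      if D.head e₀ ∈ {a | β a = true} ∧ r ∉ {a | β a = true} ∧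
          D.tail e₀ ∈ {a | β a = true}
      then D.rhoSet x {a | β a = true} - D.inflow x (D.head e₀) else 1 with hgdef
    set ε₁ : ℝ := Finset.univ.inf' hβne g with hε₁def
    have hε₁pos : 0 < ε₁ := by
      rw [hε₁def, Finset.lt_inf'_iff]
      intro β _
      simp only [hgdef]
      by_cases hP : D.head e₀ ∈ {a | β a = true} ∧ r ∉ {a | β a = true} ∧
          D.tail e₀ ∈ {a | β a = true}
      · rw [if_pos hP]
        have := hnotight {a | β a = true} hP.1 hP.2.1 hP.2.2
        linarith
      · rw [if_neg hP]; norm_num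
    have hε₁le : ∀ W' : Set V, D.head e₀ ∈ W' → r ∉ W' → D.tail e₀ ∈ W' →
        ε₁ ≤ D.rhoSet x W' - D.inflow x (D.head e₀) := by
      intro W' h1 h2 h3
      have hset : {a | (fun a => decide (a ∈ W')) a = true} = W' := by
        ext a; simp
      have hle := Finset.inf'_le (b := fun a => decide (a ∈ W')) g (Finset.mem_univ _)
      rw [← hε₁def] at hle
      simp only [hgdef, hset] at hle
      rwa [if_pos ⟨h1, h2, h3⟩] at hle
    refine ⟨e₀, hxye, min ε₁ (c e₀ - x e₀),
      lt_min hε₁pos (by linarith [hyc e₀]), ?_⟩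
    intro ε hε hεle
    have hεε₁ : ε ≤ ε₁ := le_trans hεle (min_le_left _ _)
    have hεc : ε ≤ c e₀ - x e₀ := le_trans hεle (min_le_right _ _)
    have hfeq := FlameAux.chi_eq ε e₀ x
    set f' : E → ℝ := fun e => x e + (if e = e₀ then ε else 0) with hf'def
    have hf'0 : ∀ e, 0 ≤ f' e := by
      intro e; rw [hf'def]
      by_cases h : e = e₀ <;> simp [h] <;> linarith [hx0 e, hx0 e₀]
    have hxf' : x ≤ f' := by
      intro e; rw [hf'def]
      by_cases h : e = e₀ <;> simp [h]; linarith
    have hf'c : ∀ e, f' e ≤ c e := by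
      intro e; simp only [hf'def]
      by_cases h : e = e₀ <;> simp [h]
      · linarith [hxc e₀]
      · exact hxc e
    refine ⟨?_, ?_, ?_⟩
    · intro e; rw [hfeq]; exact hf'0 e
    · intro e; rw [hfeq]; exact hf'c e
    · intro b hbr
      rw [hfeq]
      have hinf := FlameAux.inflow_add_single D x ε e₀ b
      by_cases hbu : b = D.head e₀
      · subst hbu
        rw [if_pos rfl] at hinf
        rw [hinf]
        refine le_antisymm ?_ ?_
        · -- inflow f' u ≤ lamF r u f'
          obtain ⟨W', h1, h2, h3⟩ := FlameAux.exists_mincut D hr hur hf'0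
          by_cases ht : D.tail e₀ ∈ W'
          · have hgap := hε₁le W' h1 h2 ht
            have hmono := FlameAux.rho_mono D hxf' W'
            linarith
          · have hrhoeq : D.rhoSet f' W' = D.rhoSet x W' + ε := by
              rw [hf'def, FlameAux.rho_add_single D x ε e₀ W', if_pos ⟨h1, ht⟩]
            have hwk : D.inflow x (D.head e₀) ≤ D.rhoSet x W' := by
              rw [hxflame _ hur]
              exact FlameAux.lamF_le_rhoSet D hur hx0 h1 h2
            linarith
        · have := FlameAux.lamF_le_inflow D hur hf'0
          rwa [hinf] at this
      · rw [if_neg (fun h => hbu h.symm), add_zero] at hinf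
        rw [hinf]
        refine le_antisymm ?_ ?_
        · -- inflow x b = lamF r b x ≤ lamF r b f'
          rw [hxflame b hbr]
          exact FlameAux.lamF_mono D r b hx0 hxf'
        · have := FlameAux.lamF_le_inflow D hbr hf'0
          rwa [hinf] at this
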